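/- The problem of deciding, given a finite set S of elements of a finitely generated free group F(k), whether S extends to a right order of F(k), is decidable. -/

import Mathlib

namespace RO
variable {k : ℕ}

/-- words -/
abbrev W (k : ℕ) := List (Fin k × Bool)

def inv1 (x : Fin k × Bool) : Fin k × Bool := (x.1, !x.2)

@[simp] lemma inv1_inv1 (x : Fin k × Bool) : inv1 (inv1 x) = x := by
  cases x with | mk a b => cases b <;> rfl

lemma inv1_ne (x : Fin k × Bool) : inv1 x ≠ x := by
  cases x with | mk a b => cases b <;> simp [inv1]

/-- multiply a reduced word by a letter on the left -/
def lcons (x : Fin k × Bool) : W k → W k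
  | [] => [x]
  | y :: t => if y = inv1 x then t else x :: y :: t

def IsRed (w : W k) : Prop := FreeGroup.reduce w = w

lemma isRed_nil : IsRed ([] : W k) := rfl

lemma cancel_iff (x y : Fin k × Bool) : (x.1 = y.1 ∧ x.2 = !y.2) ↔ y = inv1 x := by
  cases x with | mk a b => cases y with | mk c d =>
    simp only [inv1, Prod.mk.injEq]
    cases b <;> cases d <;> simp <;> tauto

lemma reduce_cons_of_isRed (x : Fin k × Bool) {w : W k} (h : IsRed w) :
    FreeGroup.reduce (x :: w) = lcons x w := by
  rw [FreeGroup.reduce.cons, h]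
  cases w with
  | nil => rfl
  | cons y t =>
    by_cases hc : y = inv1 x
    · simp only [lcons, if_pos hc]
      rw [if_pos ((cancel_iff x y).2 hc)]
    · simp only [lcons, if_neg hc]
      rw [if_neg (fun hh => hc ((cancel_iff x y).1 hh))]

lemma IsRed.lcons {w : W k} (h : IsRed w) (x : Fin k × Bool) : IsRed (lcons x w) := by
  rw [← reduce_cons_of_isRed x h]
  exact FreeGroup.reduce.idem

lemma IsRed.tail {w : W k} (h : IsRed w) : IsRed w.tail := by
  cases w with
  | nil => exact h
  | cons x t =>
    -- reduce (x :: t) = x :: t; show reduce t = t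
    have hx := FreeGroup.reduce.cons (L := t) x
    rw [h] at hx
    rcases ht : FreeGroup.reduce t with _ | ⟨y, t2⟩
    · rw [ht] at hx
      simp at hx
      simp [IsRed, ht, hx]
    · rw [ht] at hx
      simp only at hx
      split_ifs at hx with hcond
      · -- t2 = x :: t : length contradiction
        exfalso
        have h1 : (FreeGroup.reduce t).length ≤ t.length :=
          FreeGroup.Red.length_le (FreeGroup.reduce.red)
        rw [ht] at h1
        have h2 : t2 = x :: t := by
          simpa using hx.symm
        rw [h2] at h1
        simp at h1
      · have : t = y :: t2 := by simpa using hx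
        simp only [List.tail_cons, IsRed]
        rw [ht, this]

lemma mk_nil_eq_one : FreeGroup.mk ([] : W k) = 1 := (FreeGroup.one_eq_mk).symm

lemma mk_lcons (x : Fin k × Bool) (w : W k) :
    FreeGroup.mk (lcons x w) = FreeGroup.mk [x] * FreeGroup.mk w := by
  rw [FreeGroup.mul_mk]
  cases w with
  | nil => rfl
  | cons y t =>
    by_cases hc : y = inv1 x
    · simp only [lcons, if_pos hc, hc]
      symm
      have : ([x] ++ (inv1 x) :: t : W k) = (x.1, x.2) :: (x.1, !x.2) :: t := by
        simp [inv1]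
      rw [this, ← FreeGroup.quot_mk_eq_mk, ← FreeGroup.quot_mk_eq_mk]
      exact Quot.sound (FreeGroup.Red.Step.cons_not)
    · simp [lcons, if_neg hc]

lemma isRed_eq_of_mk_eq {u v : W k} (hu : IsRed u) (hv : IsRed v)
    (h : FreeGroup.mk u = FreeGroup.mk v) : u = v := by
  have := FreeGroup.reduce.sound h
  rwa [hu, hv] at this

lemma lcons_inv1_lcons {w : W k} (h : IsRed w) (x : Fin k × Bool) :
    lcons (inv1 x) (lcons x w) = w := by
  apply isRed_eq_of_mk_eq ((h.lcons x).lcons (inv1 x)) h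
  rw [mk_lcons, mk_lcons, ← mul_assoc]
  have : FreeGroup.mk [inv1 x] * FreeGroup.mk [x] = 1 := by
    rw [FreeGroup.mul_mk]
    have : ([inv1 x] ++ [x] : W k) = (x.1, !x.2) :: (x.1, !(!x.2)) :: [] := by
      simp [inv1]
    rw [this, ← FreeGroup.quot_mk_eq_mk, FreeGroup.one_eq_mk, ← FreeGroup.quot_mk_eq_mk]
    exact Quot.sound (FreeGroup.Red.Step.cons_not)
  rw [this, one_mul]

lemma lcons_inj {u v : W k} (hu : IsRed u) (hv : IsRed v) (x : Fin k × Bool)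
    (h : lcons x u = lcons x v) : u = v := by
  have := congrArg (lcons (inv1 x)) h
  rwa [lcons_inv1_lcons hu, lcons_inv1_lcons hv] at this

lemma isRed_toWord (g : FreeGroup (Fin k)) : IsRed g.toWord := FreeGroup.reduce_toWord g

lemma toWord_mul_letter (x : Fin k × Bool) (g : FreeGroup (Fin k)) :
    (FreeGroup.mk [x] * g).toWord = lcons x g.toWord := by
  conv_lhs => rw [← FreeGroup.mk_toWord (x := g)]
  rw [FreeGroup.mul_mk, FreeGroup.toWord_mk]
  have : ([x] ++ g.toWord : W k) = x :: g.toWord := rfl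
  rw [this, reduce_cons_of_isRed x (isRed_toWord g)]


/-! ### Suffix lists, dedup, permutations -/

def tls : W k → List (W k)
  | [] => [[]]
  | x :: t => (x :: (tls t).headI) :: tls t

lemma tls_cons_eq (w : W k) : ∃ l, tls w = w :: l := by
  induction w with
  | nil => exact ⟨[], rfl⟩
  | cons x t ih =>
    obtain ⟨l, hl⟩ := ih
    exact ⟨tls t, by simp [tls, hl]⟩

lemma tls_cons (x : Fin k × Bool) (t : W k) : tls (x :: t) = (x :: t) :: tls t := by
  obtain ⟨l, hl⟩ := tls_cons_eq t
  simp [tls, hl]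

lemma self_mem_tls (w : W k) : w ∈ tls w := by
  obtain ⟨l, hl⟩ := tls_cons_eq w
  simp [hl]

lemma nil_mem_tls (w : W k) : [] ∈ tls w := by
  induction w with
  | nil => simp [tls]
  | cons x t ih => simp [tls, ih]

lemma tail_mem_tls {u w : W k} (h : u ∈ tls w) : u.tail ∈ tls w := by
  induction w generalizing u with
  | nil =>
    simp only [tls, List.mem_singleton] at h
    simp [tls, h]
  | cons x t ih =>
    rw [tls_cons] at h ⊢
    rcases List.mem_cons.1 h with h1 | h1
    · subst h1
      simp only [List.tail_cons]
      exact List.mem_cons.2 (Or.inr (self_mem_tls t))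
    · exact List.mem_cons.2 (Or.inr (ih h1))

lemma red_mem_tls {u w : W k} (hw : IsRed w) (h : u ∈ tls w) : IsRed u := by
  induction w generalizing u with
  | nil =>
    simp only [tls, List.mem_singleton] at h
    rw [h]; exact isRed_nil
  | cons x t ih =>
    rw [tls_cons] at h
    rcases List.mem_cons.1 h with h1 | h1
    · subst h1; exact hw
    · exact ih (by simpa using hw.tail) h1

def dd : List (W k) → List (W k)
  | [] => []
  | x :: l => if x ∈ dd l then dd l else x :: dd l

lemma mem_dd {u : W k} {l : List (W k)} : u ∈ dd l ↔ u ∈ l := by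
  induction l with
  | nil => simp [dd]
  | cons x t ih =>
    by_cases h : x ∈ dd t
    · simp only [dd, if_pos h, ih, List.mem_cons]
      constructor
      · exact Or.inr
      · rintro (rfl | hh)
        · exact ih.1 h
        · exact hh
    · simp [dd, if_neg h, ih]

lemma nodup_dd (l : List (W k)) : (dd l).Nodup := by
  induction l with
  | nil => simp [dd]
  | cons x t ih =>
    by_cases h : x ∈ dd t
    · simpa [dd, if_pos h]
    · simp [dd, if_neg h, ih, h]

def ins (x : W k) : List (W k) → List (List (W k))
  | [] => [[x]]
  | y :: t => (x :: y :: t) :: (ins x t).map (y :: ·)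

def perms : List (W k) → List (List (W k))
  | [] => [[]]
  | x :: l => (perms l).flatMap (ins x)

lemma perm_of_mem_ins {x : W k} {l c : List (W k)} (h : c ∈ ins x l) : c.Perm (x :: l) := by
  induction l generalizing c with
  | nil => simp [ins] at h; simp [h]
  | cons y t ih =>
    simp only [ins, List.mem_cons, List.mem_map] at h
    rcases h with rfl | ⟨d, hd, rfl⟩
    · exact List.Perm.refl _
    · exact (List.Perm.cons y (ih hd)).trans (List.Perm.swap _ _ _)

lemma mem_ins_append (x : W k) (u v : List (W k)) : (u ++ x :: v) ∈ ins x (u ++ v) := by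
  induction u with
  | nil =>
    cases v with
    | nil => simp [ins]
    | cons y t => simp [ins]
  | cons a u ih =>
    simp only [List.cons_append, ins, List.mem_cons, List.mem_map]
    exact Or.inr ⟨u ++ x :: v, ih, rfl⟩

lemma perm_of_mem_perms {l c : List (W k)} (h : c ∈ perms l) : c.Perm l := by
  induction l generalizing c with
  | nil => simp [perms] at h; simp [h]
  | cons x t ih =>
    simp only [perms, List.mem_flatMap] at h
    obtain ⟨d, hd, hc⟩ := h
    exact (perm_of_mem_ins hc).trans (List.Perm.cons x (ih hd))

lemma mem_perms_of_perm {l c : List (W k)} (h : c.Perm l) : c ∈ perms l := by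
  induction l generalizing c with
  | nil => simp [List.Perm.eq_nil h, perms]
  | cons x t ih =>
    have hx : x ∈ c := h.mem_iff.2 (by simp)
    obtain ⟨u, v, rfl⟩ := List.append_of_mem hx
    have huv : (u ++ v).Perm t := by
      have h1 : (u ++ x :: v).Perm (x :: (u ++ v)) := List.perm_middle
      exact (h1.symm.trans h).cons_inv
    simp only [perms, List.mem_flatMap]
    exact ⟨u ++ v, ih huv, mem_ins_append x u v⟩


/-! ### The decision procedure -/

def idx (u : W k) (c : List (W k)) : ℕ :=
  @List.idxOf (W k) (@instBEqOfDecidableEq _ (by infer_instance)) u c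

lemma idx_inj {c : List (W k)} {u v : W k} (hu : u ∈ c) (hv : v ∈ c)
    (he : idx u c = idx v c) : u = v :=
  by letI : BEq (W k) := instBEqOfDecidableEq; exact (List.idxOf_inj hu).1 he

def lettersOf (c : List (W k)) : List (Fin k × Bool) :=
  (c.flatMap id).flatMap (fun x => [x, inv1 x])

def consistB (c : List (W k)) : Bool :=
  (lettersOf c).all fun x => c.all fun g => c.all fun h =>
    !(decide (lcons x g ∈ c)) || !(decide (lcons x h ∈ c)) ||
      (decide (idx g c < idx h c) ==
        decide (idx (lcons x g) c < idx (lcons x h) c))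

def suffs (L : List (W k)) : List (W k) :=
  [] :: L.flatMap (fun w => tls (FreeGroup.reduce w))

def okC (L : List (W k)) (c : List (W k)) : Bool :=
  consistB c && L.all fun w =>
    decide (idx ([] : W k) c < idx (FreeGroup.reduce w) c)

def fcheck (L : List (W k)) : Bool :=
  (L.all fun w => !(FreeGroup.reduce w).isEmpty) && ((perms (dd (suffs L))).any (okC L))

lemma fcheck_iff (L : List (W k)) : fcheck L = true ↔
    (∀ w ∈ L, FreeGroup.reduce w ≠ []) ∧
      ∃ c ∈ perms (dd (suffs L)), consistB c = true ∧
        ∀ w ∈ L, idx ([] : W k) c < idx (FreeGroup.reduce w) c := by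
  simp [fcheck, okC, List.all_eq_true, List.any_eq_true, List.isEmpty_iff, and_assoc]

lemma mem_lettersOf {c : List (W k)} {x : Fin k × Bool} {u : W k}
    (hu : u ∈ c) (hxu : lcons x u ∈ c) : x ∈ lettersOf c := by
  have key : ∀ y : Fin k × Bool, ∀ v ∈ c, y ∈ v → x = y ∨ x = inv1 y → x ∈ lettersOf c := by
    intro y v hv hyv hxy
    simp only [lettersOf, List.mem_flatMap, id]
    refine ⟨y, ⟨v, hv, hyv⟩, ?_⟩
    rcases hxy with rfl | rfl <;> simp
  cases u with
  | nil =>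
    exact key x (lcons x []) hxu (by simp [lcons]) (Or.inl rfl)
  | cons y t =>
    by_cases hc : y = inv1 x
    · exact key y (y :: t) hu (by simp) (Or.inr (by rw [hc, inv1_inv1]))
    · refine key x (lcons x (y :: t)) hxu ?_ (Or.inl rfl)
      simp [lcons, if_neg hc]

lemma consistB_spec {c : List (W k)} (hc : consistB c = true) :
    ∀ x : Fin k × Bool, ∀ g h, g ∈ c → h ∈ c → lcons x g ∈ c → lcons x h ∈ c →
      (idx g c < idx h c ↔
        idx (lcons x g) c < idx (lcons x h) c) := by
  intro x g h hg hh hxg hxh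
  have hx : x ∈ lettersOf c := mem_lettersOf hg hxg
  simp only [consistB, List.all_eq_true] at hc
  have := hc x hx g hg h hh
  rw [decide_eq_true hxg, decide_eq_true hxh] at this
  simp only [Bool.not_true, Bool.false_or] at this
  have := beq_iff_eq.1 this
  constructor
  · intro hlt
    have h1 : decide (idx g c < idx h c) = true := decide_eq_true hlt
    rw [h1] at this
    exact of_decide_eq_true this.symm
  · intro hlt
    have h1 : decide (idx (lcons x g) c < idx (lcons x h) c) = true :=
      decide_eq_true hlt
    rw [h1] at this
    exact of_decide_eq_true this


/-! ### Stages: left-invariant partial orders on sets of reduced words -/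

lemma not_isRed_cancel (x : Fin k × Bool) (t : W k) : ¬ IsRed (x :: inv1 x :: t) := by
  intro h
  exact FreeGroup.reduce.not (L₂ := []) (x := x.1) (b := x.2) (by exact h)

lemma lcons_head {a : Fin k × Bool} {t : W k} (h : IsRed (a :: t)) : lcons a t = a :: t := by
  cases t with
  | nil => rfl
  | cons y t' =>
    have hy : y ≠ inv1 a := by rintro rfl; exact not_isRed_cancel a t' h
    simp [lcons, if_neg hy]

structure Stage (k : ℕ) where
  S : Set (W k)
  ord : W k → W k → Prop
  red : ∀ w ∈ S, IsRed w
  closed : ∀ w ∈ S, w.tail ∈ S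
  nil_mem : ([] : W k) ∈ S
  ord_mem : ∀ u v, ord u v → u ∈ S ∧ v ∈ S
  irrefl : ∀ u, ¬ ord u u
  tr : ∀ u v w, ord u v → ord v w → ord u w
  total : ∀ u ∈ S, ∀ v ∈ S, u ≠ v → ord u v ∨ ord v u
  consist : ∀ x u v, u ∈ S → v ∈ S → lcons x u ∈ S → lcons x v ∈ S →
    (ord u v ↔ ord (lcons x u) (lcons x v))

def Stage.le (s t : Stage k) : Prop :=
  s.S ⊆ t.S ∧ ∀ u v, u ∈ s.S → v ∈ s.S → (s.ord u v ↔ t.ord u v)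

lemma Stage.le_refl (s : Stage k) : s.le s := ⟨subset_rfl, fun _ _ _ _ => Iff.rfl⟩

lemma Stage.le_trans {s t u : Stage k} (h1 : s.le t) (h2 : t.le u) : s.le u :=
  ⟨h1.1.trans h2.1, fun a b ha hb => (h1.2 a b ha hb).trans (h2.2 a b (h1.1 ha) (h1.1 hb))⟩

lemma insert_step (st : Stage k) (a : Fin k × Bool) (t : W k) (hg : IsRed (a :: t))
    (hgS : (a :: t) ∉ st.S) (htl : t ∈ st.S) :
    ∃ st' : Stage k, st.le st' ∧ st'.S = insert (a :: t) st.S := by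
  classical
  have hta : lcons a t = a :: t := lcons_head hg
  have hredt : IsRed t := by simpa using hg.tail
  -- images and sources of the new element
  have himg : ∀ x u, u ∈ st.S → lcons x u = a :: t → x = a ∧ u = t := by
    intro x u hu he
    cases u with
    | nil =>
      simp only [lcons] at he
      injection he with h1 h2
      exact ⟨h1, h2⟩
    | cons y t' =>
      by_cases hc : y = inv1 x
      · exfalso
        simp only [lcons, if_pos hc] at he
        have : (y :: t').tail ∈ st.S := st.closed _ hu
        simp only [List.tail_cons] at this
        rw [he] at this
        exact hgS this
      · simp only [lcons, if_neg hc] at he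
        injection he with h1 h2
        exact ⟨h1, by rw [h2]⟩
  have hsrc : ∀ x, lcons x (a :: t) ∈ st.S → x = inv1 a ∧ lcons x (a :: t) = t := by
    intro x hx
    by_cases hc : a = inv1 x
    · have hxa : x = inv1 a := by rw [hc, inv1_inv1]
      refine ⟨hxa, ?_⟩
      simp [lcons, if_pos hc]
    · exfalso
      simp only [lcons, if_neg hc] at hx
      have : (x :: a :: t).tail ∈ st.S := st.closed _ hx
      simp only [List.tail_cons] at this
      exact hgS this
  have hgg : ∀ x, lcons x (a :: t) ≠ a :: t := by
    intro x he
    by_cases hc : a = inv1 x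
    · simp only [lcons, if_pos hc] at he
      have := congrArg List.length he
      simp at this
    · simp only [lcons, if_neg hc] at he
      have := congrArg List.length he
      simp at this
  set M : Set (W k) := {m | ∃ h0, h0 ∈ st.S ∧ m ∈ st.S ∧ m = lcons a h0 ∧ st.ord h0 t} with hM
  set Low : Set (W k) := {u | u ∈ st.S ∧ (u ∈ M ∨ ∃ m ∈ M, st.ord u m)} with hLow
  have hMS : M ⊆ st.S := by rintro m ⟨h0, _, hmS, _, _⟩; exact hmS
  have hMLow : M ⊆ Low := fun m hm => ⟨hMS hm, Or.inl hm⟩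
  have hLowS : Low ⊆ st.S := fun u hu => hu.1
  have hdown : ∀ u v, u ∈ st.S → st.ord u v → v ∈ Low → u ∈ Low := by
    intro u v huS ho hv
    rcases hv.2 with hm | ⟨m, hm, hvm⟩
    · exact ⟨huS, Or.inr ⟨v, hm, ho⟩⟩
    · exact ⟨huS, Or.inr ⟨m, hm, st.tr _ _ _ ho hvm⟩⟩
  have hglow : (a :: t) ∉ Low := fun h => hgS (hLowS h)
  have hkey : ∀ h0, h0 ∈ st.S → lcons a h0 ∈ st.S → st.ord t h0 → lcons a h0 ∉ Low := by
    intro h0 hh0 haS hth hlow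
    rcases hlow.2 with hm | ⟨m, hm, hom⟩
    · obtain ⟨h1, hh1, hm1, heq, hord⟩ := hm
      have he : h0 = h1 := lcons_inj (st.red _ hh0) (st.red _ hh1) a heq
      exact st.irrefl t (st.tr _ _ _ hth (he ▸ hord))
    · obtain ⟨h1, hh1, hm1, heq, hord⟩ := hm
      rw [heq] at hom hm1
      have h01 : st.ord h0 h1 := (st.consist a h0 h1 hh0 hh1 haS hm1).2 hom
      exact st.irrefl t (st.tr _ _ _ hth (st.tr _ _ _ h01 hord))
  set ord' : W k → W k → Prop := fun u v =>
    st.ord u v ∨ (u ∈ Low ∧ v = a :: t) ∨ (u = a :: t ∧ v ∈ st.S ∧ v ∉ Low) with hord'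
  have hord'_old : ∀ u v, u ∈ st.S → v ∈ st.S → (ord' u v ↔ st.ord u v) := by
    intro u v hu hv
    constructor
    · rintro (h | ⟨_, rfl⟩ | ⟨rfl, _, _⟩)
      · exact h
      · exact absurd hv hgS
      · exact absurd hu hgS
    · exact Or.inl
  have hord'_to_g : ∀ u, u ∈ st.S → (ord' u (a :: t) ↔ u ∈ Low) := by
    intro u hu
    constructor
    · rintro (h | ⟨hl, _⟩ | ⟨rfl, _, _⟩)
      · exact absurd (st.ord_mem _ _ h).2 hgS
      · exact hl
      · exact absurd hu hgS
    · intro hl; exact Or.inr (Or.inl ⟨hl, rfl⟩)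
  have hord'_from_g : ∀ v, v ∈ st.S → (ord' (a :: t) v ↔ v ∉ Low) := by
    intro v hv
    constructor
    · rintro (h | ⟨hl, he⟩ | ⟨_, _, hnl⟩)
      · exact absurd (st.ord_mem _ _ h).1 hgS
      · exact absurd (hLowS hl) hgS
      · exact hnl
    · intro hnl; exact Or.inr (Or.inr ⟨rfl, hv, hnl⟩)
  have hord'_gg : ¬ ord' (a :: t) (a :: t) := by
    rintro (h | ⟨hl, _⟩ | ⟨_, hv, _⟩)
    · exact hgS (st.ord_mem _ _ h).1
    · exact hgS (hLowS hl)
    · exact hgS hv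
  have shape : ∀ x u, u ∈ insert (a :: t) st.S → lcons x u ∈ insert (a :: t) st.S →
      (u ∈ st.S ∧ lcons x u ∈ st.S) ∨ (x = a ∧ u = t ∧ lcons x u = a :: t) ∨
        (x = inv1 a ∧ u = a :: t ∧ lcons x u = t) := by
    intro x u hu hxu
    rcases Set.mem_insert_iff.1 hu with rfl | huS
    · rcases Set.mem_insert_iff.1 hxu with he | hxS
      · exact absurd he (hgg x)
      · obtain ⟨hx, he⟩ := hsrc x hxS
        exact Or.inr (Or.inr ⟨hx, rfl, he⟩)
    · rcases Set.mem_insert_iff.1 hxu with he | hxS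
      · obtain ⟨hx, hu'⟩ := himg x u huS he
        exact Or.inr (Or.inl ⟨hx, hu', he⟩)
      · exact Or.inl ⟨huS, hxS⟩
  refine ⟨⟨insert (a :: t) st.S, ord', ?_, ?_, ?_, ?_, ?_, ?_, ?_, ?_⟩, ⟨?_, ?_⟩, rfl⟩
  · -- red
    rintro w (rfl | hw)
    · exact hg
    · exact st.red _ hw
  · -- closed
    rintro w (rfl | hw)
    · exact Set.mem_insert_of_mem _ htl
    · exact Set.mem_insert_of_mem _ (st.closed _ hw)
  · -- nil_mem
    exact Set.mem_insert_of_mem _ st.nil_mem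
  · -- ord_mem
    rintro u v (h | ⟨hl, rfl⟩ | ⟨rfl, hv, _⟩)
    · exact ⟨Set.mem_insert_of_mem _ (st.ord_mem _ _ h).1,
        Set.mem_insert_of_mem _ (st.ord_mem _ _ h).2⟩
    · exact ⟨Set.mem_insert_of_mem _ (hLowS hl), Set.mem_insert _ _⟩
    · exact ⟨Set.mem_insert _ _, Set.mem_insert_of_mem _ hv⟩
  · -- irrefl
    rintro u (h | ⟨hl, rfl⟩ | ⟨rfl, hv, _⟩)
    · exact st.irrefl _ h
    · exact hgS (hLowS hl)
    · exact hgS hv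
  · -- trans
    rintro u v w (h1 | ⟨hl1, rfl⟩ | ⟨rfl, hv1, hnl1⟩) (h2 | ⟨hl2, he2⟩ | ⟨he2, hv2, hnl2⟩)
    · exact Or.inl (st.tr _ _ _ h1 h2)
    · exact Or.inr (Or.inl ⟨hdown _ _ (st.ord_mem _ _ h1).1 h1 hl2, he2⟩)
    · exfalso; rw [he2] at h1; exact hgS (st.ord_mem _ _ h1).2
    · exact absurd (st.ord_mem _ _ h2).1 hgS
    · exact absurd (hLowS hl2) hgS
    · -- u ∈ Low, v = g; v = g, w ∈ S, w ∉ Low : show ord' u w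
      refine Or.inl ?_
      have huS : u ∈ st.S := hLowS hl1
      have hne : u ≠ w := by rintro rfl; exact hnl2 hl1
      rcases st.total u huS w hv2 hne with h | h
      · exact h
      · exact absurd (hdown _ _ hv2 h hl1) hnl2
    · -- u = g, v ∈ S ∖ Low; ord v w
      have hwS : w ∈ st.S := (st.ord_mem _ _ h2).2
      have hwnl : w ∉ Low := fun hw => hnl1 (hdown _ _ hv1 h2 hw)
      exact Or.inr (Or.inr ⟨rfl, hwS, hwnl⟩)
    · exact absurd hl2 hnl1
    · exfalso; rw [he2] at hv1; exact hgS hv1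
  · -- total
    rintro u (rfl | huS) v (rfl | hvS) hne
    · exact absurd rfl hne
    · by_cases hl : v ∈ Low
      · exact Or.inr (Or.inr (Or.inl ⟨hl, rfl⟩))
      · exact Or.inl (Or.inr (Or.inr ⟨rfl, hvS, hl⟩))
    · by_cases hl : u ∈ Low
      · exact Or.inl (Or.inr (Or.inl ⟨hl, rfl⟩))
      · exact Or.inr (Or.inr (Or.inr ⟨rfl, huS, hl⟩))
    · rcases st.total u huS v hvS hne with h | h
      · exact Or.inl (Or.inl h)
      · exact Or.inr (Or.inl h)
  · -- consist
    intro x u v hu hv hxu hxv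
    rcases shape x u hu hxu with ⟨huS, hxuS⟩ | ⟨hxa, huT, heu⟩ | ⟨hxa, huG, heu⟩
    · rcases shape x v hv hxv with ⟨hvS, hxvS⟩ | ⟨hxa, hvT, hev⟩ | ⟨hxa, hvG, hev⟩
      · -- (L, L)
        rw [hord'_old u v huS hvS, hord'_old _ _ hxuS hxvS]
        exact st.consist x u v huS hvS hxuS hxvS
      · -- (L, M) : x = a, v = t
        rw [hxa] at hxuS
        rw [hev, hxa, hvT]
        rw [hord'_old u t huS htl, hord'_to_g _ hxuS]
        constructor
        · intro hut
          exact hMLow ⟨u, huS, hxuS, rfl, hut⟩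
        · intro hlow
          have hnet : u ≠ t := by
            rintro rfl
            rw [hta] at hxuS
            exact hgS hxuS
          rcases st.total u huS t htl hnet with h | h
          · exact h
          · exact absurd hlow (hkey u huS hxuS h)
      · -- (L, R) : x = inv1 a, v = a :: t
        rw [hxa] at hxuS
        rw [hev, hxa, hvG]
        rw [hord'_to_g u huS, hord'_old _ t hxuS htl]
        have hback : lcons a (lcons (inv1 a) u) = u := by
          have := lcons_inv1_lcons (st.red _ huS) (inv1 a)
          rwa [inv1_inv1] at this
        constructor
        · intro hlow
          have hnet : lcons (inv1 a) u ≠ t := by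
            intro he
            rw [he, hta] at hback
            rw [← hback] at huS
            exact hgS huS
          rcases st.total _ hxuS t htl hnet with h | h
          · exact h
          · exfalso
            have hu2 : lcons a (lcons (inv1 a) u) ∈ st.S := by rw [hback]; exact huS
            have := hkey _ hxuS hu2 h
            rw [hback] at this
            exact this hlow
        · intro hth
          exact hMLow ⟨lcons (inv1 a) u, hxuS, huS, hback.symm, hth⟩
    · -- u-case M : x = a, u = t
      rcases shape x v hv hxv with ⟨hvS, hxvS⟩ | ⟨hxa2, hvT, hev⟩ | ⟨hxa2, hvG, hev⟩
      · -- (M, L)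
        rw [hxa] at hxvS
        rw [heu, hxa, huT]
        rw [hord'_old t v htl hvS, hord'_from_g _ hxvS]
        constructor
        · intro htv
          exact hkey v hvS hxvS htv
        · intro hnl
          have hnet : v ≠ t := by
            rintro rfl
            rw [hta] at hxvS
            exact hgS hxvS
          rcases st.total t htl v hvS (Ne.symm hnet) with h | h
          · exact h
          · exact absurd (hMLow ⟨v, hvS, hxvS, rfl, h⟩) hnl
      · -- (M, M) : u = v = t
        rw [heu, hev, huT, hvT]
        exact ⟨fun h => absurd ((hord'_old t t htl htl).1 h) (st.irrefl t),
          fun h => absurd h hord'_gg⟩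
      · -- (M, R) : a = inv1 a impossible
        exact absurd (hxa.symm.trans hxa2).symm (inv1_ne a)
    · -- u-case R : x = inv1 a, u = a :: t
      rcases shape x v hv hxv with ⟨hvS, hxvS⟩ | ⟨hxa2, hvT, hev⟩ | ⟨hxa2, hvG, hev⟩
      · -- (R, L)
        rw [hxa] at hxvS
        rw [heu, hxa, huG]
        rw [hord'_from_g v hvS, hord'_old t _ htl hxvS]
        have hback : lcons a (lcons (inv1 a) v) = v := by
          have := lcons_inv1_lcons (st.red _ hvS) (inv1 a)
          rwa [inv1_inv1] at this
        constructor
        · intro hnl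
          have hnet : lcons (inv1 a) v ≠ t := by
            intro he
            rw [he, hta] at hback
            rw [← hback] at hvS
            exact hgS hvS
          rcases st.total t htl _ hxvS (Ne.symm hnet) with h | h
          · exact h
          · exfalso
            have hvM : v ∈ M := ⟨lcons (inv1 a) v, hxvS, hvS, hback.symm, h⟩
            exact hnl (hMLow hvM)
        · intro hth
          have hv2 : lcons a (lcons (inv1 a) v) ∈ st.S := by rw [hback]; exact hvS
          have := hkey _ hxvS hv2 hth
          rwa [hback] at this
      · -- (R, M) : inv1 a = a impossible
        exact absurd (hxa2.symm.trans hxa).symm (inv1_ne a)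
      · -- (R, R) : u = v = a :: t
        rw [heu, hev, huG, hvG]
        exact ⟨fun h => absurd h hord'_gg,
          fun h => absurd ((hord'_old t t htl htl).1 h) (st.irrefl t)⟩
  · -- le : S subset
    exact Set.subset_insert _ _
  · intro u v hu hv
    exact (hord'_old u v hu hv).symm


/-! ### Building a total left-invariant order from a stage -/

lemma add_red_word : ∀ (g : W k), IsRed g → ∀ st : Stage k, ∃ st', st.le st' ∧ g ∈ st'.S := by
  intro g
  induction g with
  | nil => exact fun _ st => ⟨st, st.le_refl, st.nil_mem⟩
  | cons a t ih =>
    intro hg st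
    obtain ⟨st1, h1, ht1⟩ := ih (by simpa using hg.tail) st
    by_cases hmem : (a :: t) ∈ st1.S
    · exact ⟨st1, h1, hmem⟩
    · obtain ⟨st2, h2, hS2⟩ := insert_step st1 a t hg hmem ht1
      exact ⟨st2, Stage.le_trans h1 h2, by rw [hS2]; exact Set.mem_insert _ _⟩

noncomputable def stages (st0 : Stage k) : ℕ → Stage k
  | 0 => st0
  | n + 1 =>
    Classical.choose (add_red_word
      (FreeGroup.reduce ((Encodable.decode (α := W k) n).getD [])) FreeGroup.reduce.idem
      (stages st0 n))

lemma stages_le {st0 : Stage k} {m n : ℕ} (h : m ≤ n) : (stages st0 m).le (stages st0 n) := by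
  induction n with
  | zero => rw [Nat.le_zero.1 h]; exact Stage.le_refl _
  | succ n ih =>
    rcases Nat.lt_or_ge m (n + 1) with h' | h'
    · refine Stage.le_trans (ih (Nat.lt_succ_iff.1 h')) ?_
      simp only [stages]
      exact (Classical.choose_spec (add_red_word _ FreeGroup.reduce.idem (stages st0 n))).1
    · rw [Nat.le_antisymm h h']
      exact Stage.le_refl _

lemma mem_stages_aux (st0 : Stage k) (n : ℕ) :
    FreeGroup.reduce ((Encodable.decode (α := W k) n).getD []) ∈ (stages st0 (n + 1)).S := by
  simp only [stages]
  exact (Classical.choose_spec (add_red_word _ FreeGroup.reduce.idem (stages st0 n))).2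

lemma mem_stages' (st0 : Stage k) (u : FreeGroup (Fin k)) :
    ∃ n, u.toWord ∈ (stages st0 n).S := by
  refine ⟨Encodable.encode u.toWord + 1, ?_⟩
  have := mem_stages_aux st0 (Encodable.encode u.toWord)
  rwa [Encodable.encodek, Option.getD_some, FreeGroup.reduce_toWord] at this

def LT (st0 : Stage k) (u v : FreeGroup (Fin k)) : Prop :=
  ∃ n, (stages st0 n).ord u.toWord v.toWord

lemma LT.up {st0 : Stage k} {m n : ℕ} (h : m ≤ n) {u v : W k}
    (ho : (stages st0 m).ord u v) : (stages st0 n).ord u v := by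
  have hm := (stages st0 m).ord_mem _ _ ho
  exact ((stages_le h).2 u v hm.1 hm.2).1 ho

lemma LT.irrefl (st0 : Stage k) (u : FreeGroup (Fin k)) : ¬ LT st0 u u := by
  rintro ⟨n, h⟩
  exact (stages st0 n).irrefl _ h

lemma LT.trans {st0 : Stage k} {u v w : FreeGroup (Fin k)}
    (h1 : LT st0 u v) (h2 : LT st0 v w) : LT st0 u w := by
  obtain ⟨n1, h1⟩ := h1
  obtain ⟨n2, h2⟩ := h2
  exact ⟨max n1 n2, (stages st0 _).tr _ _ _ (LT.up (le_max_left _ _) h1)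
    (LT.up (le_max_right _ _) h2)⟩

lemma LT.total {st0 : Stage k} {u v : FreeGroup (Fin k)} (h : u ≠ v) :
    LT st0 u v ∨ LT st0 v u := by
  obtain ⟨n1, h1⟩ := mem_stages' st0 u
  obtain ⟨n2, h2⟩ := mem_stages' st0 v
  have hu : u.toWord ∈ (stages st0 (max n1 n2)).S := (stages_le (le_max_left n1 n2)).1 h1
  have hv : v.toWord ∈ (stages st0 (max n1 n2)).S := (stages_le (le_max_right n1 n2)).1 h2
  have hne : u.toWord ≠ v.toWord := fun he => h (FreeGroup.toWord_injective he)
  rcases (stages st0 (max n1 n2)).total _ hu _ hv hne with h' | h'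
  · exact Or.inl ⟨_, h'⟩
  · exact Or.inr ⟨_, h'⟩

lemma LT.letter {st0 : Stage k} (x : Fin k × Bool) (u v : FreeGroup (Fin k)) :
    LT st0 u v ↔ LT st0 (FreeGroup.mk [x] * u) (FreeGroup.mk [x] * v) := by
  have hxu : (FreeGroup.mk [x] * u).toWord = lcons x u.toWord := toWord_mul_letter x u
  have hxv : (FreeGroup.mk [x] * v).toWord = lcons x v.toWord := toWord_mul_letter x v
  constructor
  · rintro ⟨n, h⟩
    obtain ⟨n1, h1⟩ := mem_stages' st0 (FreeGroup.mk [x] * u)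
    obtain ⟨n2, h2⟩ := mem_stages' st0 (FreeGroup.mk [x] * v)
    set N := max n (max n1 n2) with hN
    have hu : u.toWord ∈ (stages st0 N).S :=
      (((stages st0 N)).ord_mem _ _ (LT.up (le_max_left _ _) h)).1
    have hv : v.toWord ∈ (stages st0 N).S :=
      (((stages st0 N)).ord_mem _ _ (LT.up (le_max_left _ _) h)).2
    have hu' : lcons x u.toWord ∈ (stages st0 N).S := by
      rw [← hxu]; exact (stages_le ((le_max_left n1 n2).trans (le_max_right _ _))).1 h1
    have hv' : lcons x v.toWord ∈ (stages st0 N).S := by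
      rw [← hxv]; exact (stages_le ((le_max_right n1 n2).trans (le_max_right _ _))).1 h2
    refine ⟨N, ?_⟩
    rw [hxu, hxv]
    exact ((stages st0 N).consist x _ _ hu hv hu' hv').1 (LT.up (le_max_left _ _) h)
  · rintro ⟨n, h⟩
    rw [hxu, hxv] at h
    obtain ⟨n1, h1⟩ := mem_stages' st0 u
    obtain ⟨n2, h2⟩ := mem_stages' st0 v
    set N := max n (max n1 n2) with hN
    have hu' : lcons x u.toWord ∈ (stages st0 N).S :=
      (((stages st0 N)).ord_mem _ _ (LT.up (le_max_left _ _) h)).1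
    have hv' : lcons x v.toWord ∈ (stages st0 N).S :=
      (((stages st0 N)).ord_mem _ _ (LT.up (le_max_left _ _) h)).2
    have hu : u.toWord ∈ (stages st0 N).S :=
      (stages_le ((le_max_left n1 n2).trans (le_max_right _ _))).1 h1
    have hv : v.toWord ∈ (stages st0 N).S :=
      (stages_le ((le_max_right n1 n2).trans (le_max_right _ _))).1 h2
    exact ⟨N, ((stages st0 N).consist x _ _ hu hv hu' hv').2 (LT.up (le_max_left _ _) h)⟩

lemma LT.mul {st0 : Stage k} (g : FreeGroup (Fin k)) :
    ∀ u v, LT st0 u v ↔ LT st0 (g * u) (g * v) := by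
  refine FreeGroup.induction_on g ?_ ?_ ?_ ?_
  · intro u v; simp
  · intro x u v
    have hp : (FreeGroup.of x : FreeGroup (Fin k)) = FreeGroup.mk [(x, true)] := rfl
    rw [hp]
    exact LT.letter (x, true) u v
  · intro x ih u v
    have := ih ((FreeGroup.of x)⁻¹ * u) ((FreeGroup.of x)⁻¹ * v)
    rw [mul_inv_cancel_left, mul_inv_cancel_left] at this
    exact this.symm
  · intro a b iha ihb u v
    have := (ihb u v).trans (iha (b * u) (b * v))
    rwa [← mul_assoc, ← mul_assoc] at this


/-! ### Soundness -/

lemma sound {L : List (W k)} (h : fcheck L = true) :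
    ∃ r : FreeGroup (Fin k) → FreeGroup (Fin k) → Prop,
      IsLinearOrder _ r ∧ (∀ a b c, r a b → r (a * c) (b * c)) ∧
        (∀ w ∈ L, r 1 (FreeGroup.mk w) ∧ FreeGroup.mk w ≠ 1) := by
  classical
  obtain ⟨hne, c, hc, hcons, hpos⟩ := (fcheck_iff L).1 h
  have hperm := perm_of_mem_perms hc
  have hmem : ∀ u : W k, u ∈ c ↔ (u = [] ∨ ∃ w ∈ L, u ∈ tls (FreeGroup.reduce w)) := by
    intro u
    rw [hperm.mem_iff, mem_dd]
    simp [suffs, List.mem_flatMap]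
  have hred : ∀ u ∈ c, IsRed u := by
    intro u hu
    rcases (hmem u).1 hu with rfl | ⟨w, _, hw⟩
    · exact isRed_nil
    · exact red_mem_tls FreeGroup.reduce.idem hw
  have hclosed : ∀ u ∈ c, u.tail ∈ c := by
    intro u hu
    rcases (hmem u).1 hu with rfl | ⟨w, hwL, hw⟩
    · exact hu
    · exact (hmem _).2 (Or.inr ⟨w, hwL, tail_mem_tls hw⟩)
  have hnilc : ([] : W k) ∈ c := (hmem []).2 (Or.inl rfl)
  set st0 : Stage k :=
    { S := {u | u ∈ c}
      ord := fun u v => u ∈ c ∧ v ∈ c ∧ idx u c < idx v c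
      red := hred
      closed := hclosed
      nil_mem := hnilc
      ord_mem := fun u v h => ⟨h.1, h.2.1⟩
      irrefl := fun u h => lt_irrefl _ h.2.2
      tr := fun u v w h1 h2 => ⟨h1.1, h2.2.1, h1.2.2.trans h2.2.2⟩
      total := by
        intro u hu v hv huv
        have : idx u c ≠ idx v c := fun he => huv (idx_inj hu hv he)
        rcases this.lt_or_gt with h' | h'
        · exact Or.inl ⟨hu, hv, h'⟩
        · exact Or.inr ⟨hv, hu, h'⟩
      consist := by
        intro x u v hu hv hxu hxv
        have := consistB_spec hcons x u v hu hv hxu hxv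
        constructor
        · rintro ⟨_, _, hlt⟩
          exact ⟨hxu, hxv, this.1 hlt⟩
        · rintro ⟨_, _, hlt⟩
          exact ⟨hu, hv, this.2 hlt⟩ } with hst0
  have hposLT : ∀ w ∈ L, LT st0 1 (FreeGroup.mk w) := by
    intro w hw
    refine ⟨0, ?_⟩
    have h1 : (FreeGroup.mk w).toWord = FreeGroup.reduce w := FreeGroup.toWord_mk
    have h0 : (1 : FreeGroup (Fin k)).toWord = [] := FreeGroup.toWord_one
    simp only [stages, h1, h0]
    exact ⟨hnilc, (hmem _).2 (Or.inr ⟨w, hw, self_mem_tls _⟩), hpos w hw⟩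
  refine ⟨fun a b => a = b ∨ LT st0 b⁻¹ a⁻¹, ?_, ?_, ?_⟩
  · refine { refl := fun a => Or.inl rfl, trans := ?_, antisymm := ?_, total := ?_ }
    · rintro a b cc (rfl | h1) h2
      · exact h2
      · rcases h2 with rfl | h2
        · exact Or.inr h1
        · exact Or.inr (LT.trans h2 h1)
    · rintro a b (rfl | h1) h2
      · rfl
      · rcases h2 with rfl | h2
        · rfl
        · exact absurd (LT.trans h1 h2) (LT.irrefl st0 _)
    · intro a b
      by_cases hab : a = b
      · exact Or.inl (Or.inl hab)
      · have : b⁻¹ ≠ a⁻¹ := fun he => hab (inv_injective he).symm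
        rcases LT.total (st0 := st0) this with h' | h'
        · exact Or.inl (Or.inr h')
        · exact Or.inr (Or.inr h')
  · rintro a b cc (rfl | h1)
    · exact Or.inl rfl
    · refine Or.inr ?_
      have := (LT.mul (st0 := st0) cc⁻¹ b⁻¹ a⁻¹).1 h1
      rwa [← mul_inv_rev, ← mul_inv_rev] at this
  · intro w hw
    constructor
    · refine Or.inr ?_
      rw [inv_one]
      have := (LT.mul (st0 := st0) (FreeGroup.mk w)⁻¹ 1 (FreeGroup.mk w)).1 (hposLT w hw)
      rwa [mul_one, inv_mul_cancel] at this
    · intro he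
      have : (FreeGroup.mk w).toWord = [] := by rw [he, FreeGroup.toWord_one]
      rw [FreeGroup.toWord_mk] at this
      exact hne w hw this


/-! ### Completeness -/

lemma idx_lt {c : List (W k)} {u : W k} (h : u ∈ c) : idx u c < c.length :=
  by letI : BEq (W k) := instBEqOfDecidableEq; exact List.idxOf_lt_length_iff.2 h

lemma idx_get {c : List (W k)} {u : W k} (h : u ∈ c) :
    getElem c (idx u c) (idx_lt h) = u :=
  by letI : BEq (W k) := instBEqOfDecidableEq; exact List.getElem_idxOf _

lemma complete {L : List (W k)} (r : FreeGroup (Fin k) → FreeGroup (Fin k) → Prop)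
    (hlin : IsLinearOrder _ r) (hinv : ∀ a b c, r a b → r (a * c) (b * c))
    (hL : ∀ w ∈ L, r 1 (FreeGroup.mk w) ∧ FreeGroup.mk w ≠ 1) : fcheck L = true := by
  classical
  haveI := hlin
  -- the auxiliary left order
  set s : FreeGroup (Fin k) → FreeGroup (Fin k) → Prop := fun a b => r b⁻¹ a⁻¹ with hs
  have hs_inv : ∀ g u v, s u v ↔ s (g * u) (g * v) := by
    intro g u v
    constructor
    · intro h
      have := hinv _ _ g⁻¹ h
      simp only [hs, mul_inv_rev]
      exact this
    · intro h
      simp only [hs, mul_inv_rev] at h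
      have := hinv _ _ g h
      simpa using this
  have hs_trans : ∀ {a b c}, s a b → s b c → s a c := by
    intro a b c h1 h2
    exact trans_of r h2 h1
  have hs_total : ∀ a b, s a b ∨ s b a := by
    intro a b
    rcases total_of r b⁻¹ a⁻¹ with h | h
    · exact Or.inl h
    · exact Or.inr h
  have hs_antisymm : ∀ {a b}, s a b → s b a → a = b := by
    intro a b h1 h2
    have h3 : b⁻¹ = a⁻¹ := antisymm_of r h1 h2
    exact (inv_injective h3).symm
  have hs_refl : ∀ a, s a a := fun a => refl_of r _
  -- positivity facts
  have hpos : ∀ w ∈ L, s 1 (FreeGroup.mk w) ∧ FreeGroup.mk w ≠ 1 := by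
    intro w hw
    refine ⟨?_, (hL w hw).2⟩
    have := hinv _ _ (FreeGroup.mk w)⁻¹ (hL w hw).1
    simp only [one_mul, mul_inv_cancel] at this
    simpa [hs] using this
  have hrw_ne : ∀ w ∈ L, FreeGroup.reduce w ≠ [] := by
    intro w hw he
    refine (hL w hw).2 ?_
    rw [← FreeGroup.reduce.self (L := w), he]
    exact mk_nil_eq_one
  -- sort the suffix list
  set R : W k → W k → Prop := fun u v => s (FreeGroup.mk u) (FreeGroup.mk v) with hR
  haveI : DecidableRel R := Classical.decRel R
  haveI : IsTotal (W k) R := ⟨fun u v => hs_total _ _⟩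
  haveI : IsTrans (W k) R := ⟨fun u v w h1 h2 => hs_trans h1 h2⟩
  set B := dd (suffs L) with hB
  set c := List.insertionSort R B with hc
  have hperm : c.Perm B := List.perm_insertionSort R B
  have hsorted : List.Pairwise R c := List.pairwise_insertionSort R B
  have hnodup : c.Nodup := hperm.nodup_iff.2 (nodup_dd _)
  have hmem : ∀ u : W k, u ∈ c ↔ u ∈ suffs L := fun u => hperm.mem_iff.trans mem_dd
  have hmem' : ∀ u : W k, u ∈ c ↔ (u = [] ∨ ∃ w ∈ L, u ∈ tls (FreeGroup.reduce w)) := by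
    intro u
    rw [hmem]
    simp [suffs, List.mem_flatMap]
  have hred : ∀ u ∈ c, IsRed u := by
    intro u hu
    rcases (hmem' u).1 hu with rfl | ⟨w, _, hw⟩
    · exact isRed_nil
    · exact red_mem_tls FreeGroup.reduce.idem hw
  -- index characterisation
  have hidx : ∀ u ∈ c, ∀ v ∈ c, (idx u c < idx v c ↔ (R u v ∧ u ≠ v)) := by
    intro u hu v hv
    constructor
    · intro hlt
      have hne : u ≠ v := by
        rintro rfl
        exact lt_irrefl _ hlt
      refine ⟨?_, hne⟩
      have := (List.pairwise_iff_getElem.1 hsorted) _ _ (idx_lt hu) (idx_lt hv) hlt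
      rwa [idx_get hu, idx_get hv] at this
    · rintro ⟨hRuv, hne⟩
      rcases Nat.lt_trichotomy (idx u c) (idx v c) with h' | h' | h'
      · exact h'
      · exact absurd (idx_inj hu hv h') hne
      · exfalso
        have := (List.pairwise_iff_getElem.1 hsorted) _ _ (idx_lt hv) (idx_lt hu) h'
        rw [idx_get hu, idx_get hv] at this
        exact hne (isRed_eq_of_mk_eq (hred u hu) (hred v hv) (hs_antisymm hRuv this))
  -- ≠ transfers through mk on reduced words
  have hne_mk : ∀ u ∈ c, ∀ v ∈ c, (u ≠ v ↔ FreeGroup.mk u ≠ FreeGroup.mk v) := by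
    intro u hu v hv
    constructor
    · intro hne he
      exact hne (isRed_eq_of_mk_eq (hred u hu) (hred v hv) he)
    · intro hne he
      exact hne (by rw [he])
  rw [fcheck_iff]
  refine ⟨hrw_ne, c, mem_perms_of_perm hperm, ?_, ?_⟩
  · -- consistency
    simp only [consistB, List.all_eq_true]
    intro x hx g hg h hh
    by_cases h1 : lcons x g ∈ c
    · by_cases h2 : lcons x h ∈ c
      · have key : (idx g c < idx h c) ↔ (idx (lcons x g) c < idx (lcons x h) c) := by
          rw [hidx g hg h hh, hidx _ h1 _ h2]
          have e1 : FreeGroup.mk (lcons x g) = FreeGroup.mk [x] * FreeGroup.mk g := mk_lcons x g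
          have e2 : FreeGroup.mk (lcons x h) = FreeGroup.mk [x] * FreeGroup.mk h := mk_lcons x h
          have hRiff : R g h ↔ R (lcons x g) (lcons x h) := by
            simp only [hR, e1, e2]
            exact hs_inv (FreeGroup.mk [x]) _ _
          have hneiff : g ≠ h ↔ lcons x g ≠ lcons x h := by
            constructor
            · intro hne he
              exact hne (lcons_inj (hred g hg) (hred h hh) x he)
            · intro hne he
              exact hne (by rw [he])
          rw [← hRiff, ← hneiff]
        rw [decide_eq_true h1, decide_eq_true h2]
        simp only [Bool.not_true, Bool.false_or]
        rw [beq_iff_eq]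
        exact decide_eq_decide.2 key
      · simp [h2]
    · simp [h1]
  · intro w hw
    have hnilc : ([] : W k) ∈ c := (hmem' []).2 (Or.inl rfl)
    have hwc : FreeGroup.reduce w ∈ c := (hmem' _).2 (Or.inr ⟨w, hw, self_mem_tls _⟩)
    rw [hidx _ hnilc _ hwc]
    constructor
    · show R [] (FreeGroup.reduce w)
      have hmkr : FreeGroup.mk (FreeGroup.reduce w) = FreeGroup.mk w := FreeGroup.reduce.self
      simp only [hR, mk_nil_eq_one, hmkr]
      exact (hpos w hw).1
    · exact fun he => hrw_ne w hw he.symm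


/-! ### Computability -/

section Comp

open Primrec

lemma all_eq_foldr (l : List α) (q : α → Bool) :
    l.foldr (fun b r => q b && r) true = l.all q := by
  induction l with
  | nil => rfl
  | cons b t ih => simp [List.all_cons, ih]

lemma any_eq_foldr (l : List α) (q : α → Bool) :
    l.foldr (fun b r => q b || r) false = l.any q := by
  induction l with
  | nil => rfl
  | cons b t ih => simp [List.any_cons, ih]

lemma primrec_list_all {α β} [Primcodable α] [Primcodable β] {f : α → List β} {p : α → β → Bool}
    (hf : Primrec f) (hp : Primrec₂ p) : Primrec fun a => (f a).all (p a) := by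
  have h : Primrec₂ fun (a : α) (bs : β × Bool) => p a bs.1 && bs.2 :=
    ((dom_bool₂ (· && ·)).comp (hp.comp fst (fst.comp snd)) (snd.comp snd)).to₂
  exact (list_foldr hf (const true) h).of_eq fun a => all_eq_foldr _ _

lemma primrec_list_any {α β} [Primcodable α] [Primcodable β] {f : α → List β} {p : α → β → Bool}
    (hf : Primrec f) (hp : Primrec₂ p) : Primrec fun a => (f a).any (p a) := by
  have h : Primrec₂ fun (a : α) (bs : β × Bool) => p a bs.1 || bs.2 :=
    ((dom_bool₂ (· || ·)).comp (hp.comp fst (fst.comp snd)) (snd.comp snd)).to₂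
  exact (list_foldr hf (const false) h).of_eq fun a => any_eq_foldr _ _

variable (k)

lemma inv1_primrec : Primrec (inv1 : Fin k × Bool → Fin k × Bool) :=
  Primrec.pair fst (Primrec.not.comp snd)

lemma lcons_primrec : Primrec₂ (lcons : Fin k × Bool → W k → W k) := by
  have hcond : PrimrecPred fun (q : ((Fin k × Bool) × W k) × (Fin k × Bool) × W k) =>
      q.2.1 = inv1 q.1.1 :=
    Primrec.eq.comp (fst.comp snd) ((inv1_primrec k).comp (fst.comp fst))
  have hh : Primrec₂ fun (a : (Fin k × Bool) × W k) (bl : (Fin k × Bool) × W k) =>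
      if bl.1 = inv1 a.1 then bl.2 else a.1 :: bl.1 :: bl.2 :=
    (Primrec.ite hcond (snd.comp snd)
      (list_cons.comp (fst.comp fst) (list_cons.comp (fst.comp snd) (snd.comp snd)))).to₂
  have := list_casesOn (f := fun a : (Fin k × Bool) × W k => a.2)
    (g := fun a : (Fin k × Bool) × W k => [a.1])
    (h := fun a bl => if bl.1 = inv1 a.1 then bl.2 else a.1 :: bl.1 :: bl.2)
    snd (list_cons.comp fst (const [])) hh
  refine this.to₂.of_eq ?_
  intro x w
  cases w <;> rfl

lemma reduce_cons_lcons (x : Fin k × Bool) (w : W k) :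
    FreeGroup.reduce (x :: w) = lcons x (FreeGroup.reduce w) := by
  rw [FreeGroup.reduce.cons]
  cases h : FreeGroup.reduce w with
  | nil => rfl
  | cons y t =>
    show (if x.1 = y.1 ∧ x.2 = !y.2 then t else x :: y :: t) = lcons x (y :: t)
    by_cases hc : y = inv1 x
    · rw [if_pos ((cancel_iff x y).2 hc)]
      simp [lcons, if_pos hc]
    · rw [if_neg (fun hh => hc ((cancel_iff x y).1 hh))]
      simp [lcons, if_neg hc]

lemma reduce_eq_foldr (w : W k) : FreeGroup.reduce w = w.foldr lcons [] := by
  induction w with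
  | nil => rfl
  | cons x t ih => rw [reduce_cons_lcons, ih, List.foldr_cons]

lemma reduce_primrec : Primrec (FreeGroup.reduce : W k → W k) := by
  have h : Primrec₂ fun (_ : W k) (bs : (Fin k × Bool) × W k) => lcons bs.1 bs.2 :=
    ((lcons_primrec k).comp (fst.comp snd) (snd.comp snd)).to₂
  exact (list_foldr Primrec.id (const []) h).of_eq fun w => (reduce_eq_foldr k w).symm

lemma tls_eq_foldr (w : W k) : tls w = w.foldr (fun x r => (x :: r.headI) :: r) [[]] := by
  induction w with
  | nil => rfl
  | cons x t ih => rw [tls, ih, List.foldr_cons]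

lemma tls_primrec : Primrec (tls : W k → List (W k)) := by
  have h : Primrec₂ fun (_ : W k) (bs : (Fin k × Bool) × List (W k)) =>
      (bs.1 :: bs.2.headI) :: bs.2 :=
    (list_cons.comp (list_cons.comp (fst.comp snd) (list_headI.comp (snd.comp snd)))
      (snd.comp snd)).to₂
  exact (list_foldr Primrec.id (const [[]]) h).of_eq fun w => (tls_eq_foldr k w).symm

lemma mem_primrec : PrimrecRel (fun (u : W k) (c : List (W k)) => u ∈ c) := by
  have h : Primrec fun p : W k × List (W k) => decide (idx p.1 p.2 < p.2.length) :=
    Primrec.nat_lt.decide.comp (list_idxOf.comp fst snd) (list_length.comp snd)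
  refine Primrec₂.primrecRel (h.to₂.of_eq ?_)
  intro u c
  letI : BEq (W k) := instBEqOfDecidableEq
  exact decide_eq_decide.2 (List.idxOf_lt_length_iff)

lemma dd_eq_foldr (l : List (W k)) :
    dd l = l.foldr (fun x r => if x ∈ r then r else x :: r) [] := by
  induction l with
  | nil => rfl
  | cons x t ih => rw [dd, ih, List.foldr_cons]

lemma dd_primrec : Primrec (dd : List (W k) → List (W k)) := by
  have hcond : PrimrecPred fun (q : List (W k) × W k × List (W k)) => q.2.1 ∈ q.2.2 :=
    (mem_primrec k).comp (fst.comp snd) (snd.comp snd)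
  have h : Primrec₂ fun (_ : List (W k)) (bs : W k × List (W k)) =>
      if bs.1 ∈ bs.2 then bs.2 else bs.1 :: bs.2 :=
    (Primrec.ite hcond (snd.comp snd) (list_cons.comp (fst.comp snd) (snd.comp snd))).to₂
  exact (list_foldr Primrec.id (const []) h).of_eq fun l => (dd_eq_foldr k l).symm

def insF (x : W k) (l : List (W k)) : List (W k) × List (List (W k)) :=
  l.foldr (fun y pr => (y :: pr.1, (x :: y :: pr.1) :: pr.2.map (y :: ·))) ([], [[x]])

lemma insF_spec (x : W k) (l : List (W k)) : insF k x l = (l, ins x l) := by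
  induction l with
  | nil => rfl
  | cons y t ih =>
    simp only [insF, List.foldr_cons] at ih ⊢
    rw [ih]
    simp [ins]

lemma insF_primrec : Primrec₂ (insF k) := by
  have h : Primrec₂ fun (a : W k × List (W k)) (bs : W k × List (W k) × List (List (W k))) =>
      ((bs.1 :: bs.2.1 : List (W k)), ((a.1 :: bs.1 :: bs.2.1 : List (W k)) :: bs.2.2.map (bs.1 :: ·) :
        List (List (List (Fin k × Bool))))) := by
    have hy : Primrec fun q : (W k × List (W k)) × W k × List (W k) × List (List (W k)) =>
        q.2.1 := fst.comp snd
    have hp1 : Primrec fun q : (W k × List (W k)) × W k × List (W k) × List (List (W k)) =>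
        q.2.2.1 := fst.comp (snd.comp snd)
    have hp2 : Primrec fun q : (W k × List (W k)) × W k × List (W k) × List (List (W k)) =>
        q.2.2.2 := snd.comp (snd.comp snd)
    have hx : Primrec fun q : (W k × List (W k)) × W k × List (W k) × List (List (W k)) =>
        q.1.1 := fst.comp fst
    exact (Primrec.pair (list_cons.comp hy hp1)
      (list_cons.comp (list_cons.comp hx (list_cons.comp hy hp1))
        (list_map hp2 ((list_cons.comp (hy.comp fst) snd).to₂)))).to₂
  have := list_foldr (f := fun a : W k × List (W k) => a.2)
    (g := fun a : W k × List (W k) => (([] : List (W k)), ([[a.1]] : List (List (W k)))))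
    snd (Primrec.pair (const []) (list_cons.comp (list_cons.comp fst (const [])) (const []))) h
  exact this.to₂.of_eq fun x l => rfl

lemma ins_primrec : Primrec₂ (ins : W k → List (W k) → List (List (W k))) := by
  have := snd.comp ((insF_primrec k).comp fst snd)
  refine this.to₂.of_eq ?_
  intro x l
  rw [insF_spec]

lemma perms_eq_foldr (l : List (W k)) :
    perms l = l.foldr (fun x acc => acc.flatMap (ins x)) [[]] := by
  induction l with
  | nil => rfl
  | cons x t ih => rw [perms, ih, List.foldr_cons]

lemma perms_primrec : Primrec (perms : List (W k) → List (List (W k))) := by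
  have h : Primrec₂ fun (_ : List (W k)) (bs : W k × List (List (W k))) =>
      bs.2.flatMap (ins bs.1) :=
    (list_flatMap (snd.comp snd) (((ins_primrec k).comp ((fst.comp snd).comp fst) snd).to₂)).to₂
  exact (list_foldr Primrec.id (const [[]]) h).of_eq fun l => (perms_eq_foldr k l).symm

lemma lettersOf_primrec : Primrec (lettersOf : List (W k) → List (Fin k × Bool)) := by
  have h1 : Primrec fun c : List (W k) => c.flatMap id :=
    list_flatMap Primrec.id Primrec₂.right
  exact list_flatMap h1
    ((list_cons.comp snd (list_cons.comp ((inv1_primrec k).comp snd) (const []))).to₂)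

lemma idx_primrec : Primrec₂ (idx : W k → List (W k) → ℕ) := list_idxOf

lemma consistB_primrec : Primrec (consistB : List (W k) → Bool) := by
  -- innermost: q = ((c, x), g), h ↦ bool
  have hin : Primrec₂ fun (q : (List (W k) × (Fin k × Bool)) × W k) (h : W k) =>
      (!(decide (lcons q.1.2 q.2 ∈ q.1.1)) || !(decide (lcons q.1.2 h ∈ q.1.1)) ||
        (decide (idx q.2 q.1.1 < idx h q.1.1) ==
          decide (idx (lcons q.1.2 q.2) q.1.1 < idx (lcons q.1.2 h) q.1.1))) := by
    have hc : Primrec fun p : ((List (W k) × (Fin k × Bool)) × W k) × W k => p.1.1.1 :=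
      fst.comp (fst.comp fst)
    have hx : Primrec fun p : ((List (W k) × (Fin k × Bool)) × W k) × W k => p.1.1.2 :=
      snd.comp (fst.comp fst)
    have hg : Primrec fun p : ((List (W k) × (Fin k × Bool)) × W k) × W k => p.1.2 :=
      snd.comp fst
    have hhh : Primrec fun p : ((List (W k) × (Fin k × Bool)) × W k) × W k => p.2 := snd
    have hxg : Primrec fun p : ((List (W k) × (Fin k × Bool)) × W k) × W k =>
        lcons p.1.1.2 p.1.2 := (lcons_primrec k).comp hx hg
    have hxh : Primrec fun p : ((List (W k) × (Fin k × Bool)) × W k) × W k =>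
        lcons p.1.1.2 p.2 := (lcons_primrec k).comp hx hhh
    have m1 : Primrec fun p : ((List (W k) × (Fin k × Bool)) × W k) × W k =>
        decide (lcons p.1.1.2 p.1.2 ∈ p.1.1.1) := (mem_primrec k).decide.comp hxg hc
    have m2 : Primrec fun p : ((List (W k) × (Fin k × Bool)) × W k) × W k =>
        decide (lcons p.1.1.2 p.2 ∈ p.1.1.1) := (mem_primrec k).decide.comp hxh hc
    have d1 : Primrec fun p : ((List (W k) × (Fin k × Bool)) × W k) × W k =>
        decide (idx p.1.2 p.1.1.1 < idx p.2 p.1.1.1) :=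
      Primrec.nat_lt.decide.comp ((idx_primrec k).comp hg hc) ((idx_primrec k).comp hhh hc)
    have d2 : Primrec fun p : ((List (W k) × (Fin k × Bool)) × W k) × W k =>
        decide (idx (lcons p.1.1.2 p.1.2) p.1.1.1 < idx (lcons p.1.1.2 p.2) p.1.1.1) :=
      Primrec.nat_lt.decide.comp ((idx_primrec k).comp hxg hc) ((idx_primrec k).comp hxh hc)
    exact ((dom_bool₂ (· || ·)).comp
      ((dom_bool₂ (· || ·)).comp (Primrec.not.comp m1) (Primrec.not.comp m2))
      ((dom_bool₂ (· == ·)).comp d1 d2)).to₂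
  have hmid : Primrec₂ fun (q : List (W k) × (Fin k × Bool)) (g : W k) =>
      q.1.all fun h =>
        (!(decide (lcons q.2 g ∈ q.1)) || !(decide (lcons q.2 h ∈ q.1)) ||
          (decide (idx g q.1 < idx h q.1) ==
            decide (idx (lcons q.2 g) q.1 < idx (lcons q.2 h) q.1))) := by
    have := primrec_list_all (f := fun q : (List (W k) × (Fin k × Bool)) × W k => q.1.1)
      (fst.comp fst) hin
    exact this.to₂
  have hout : Primrec₂ fun (c : List (W k)) (x : Fin k × Bool) =>
      c.all fun g => c.all fun h =>
        (!(decide (lcons x g ∈ c)) || !(decide (lcons x h ∈ c)) ||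
          (decide (idx g c < idx h c) ==
            decide (idx (lcons x g) c < idx (lcons x h) c))) := by
    have := primrec_list_all (f := fun q : List (W k) × (Fin k × Bool) => q.1) fst hmid
    exact this.to₂
  have := primrec_list_all (f := fun c : List (W k) => lettersOf c) (lettersOf_primrec k) hout
  exact this.of_eq fun c => rfl

lemma suffs_primrec : Primrec (suffs : List (W k) → List (W k)) := by
  have h : Primrec fun L : List (W k) => L.flatMap (fun w => tls (FreeGroup.reduce w)) :=
    list_flatMap Primrec.id (((tls_primrec k).comp ((reduce_primrec k).comp snd)).to₂)
  exact list_cons.comp (const []) h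

lemma okC_primrec : Primrec₂ (okC : List (W k) → List (W k) → Bool) := by
  have hp : Primrec₂ fun (q : List (W k) × List (W k)) (w : W k) =>
      decide (idx ([] : W k) q.2 < idx (FreeGroup.reduce w) q.2) := by
    refine (Primrec.nat_lt.decide.comp ((idx_primrec k).comp (const []) (snd.comp fst))
      ((idx_primrec k).comp ((reduce_primrec k).comp snd) (snd.comp fst))).to₂
  have hall : Primrec fun q : List (W k) × List (W k) => q.1.all fun w =>
      decide (idx ([] : W k) q.2 < idx (FreeGroup.reduce w) q.2) :=
    primrec_list_all fst hp
  exact ((dom_bool₂ (· && ·)).comp ((consistB_primrec k).comp snd) hall).to₂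

lemma fcheck_primrec : Primrec (fcheck : List (W k) → Bool) := by
  have h1 : Primrec fun L : List (W k) => L.all fun w => !(FreeGroup.reduce w).isEmpty := by
    refine primrec_list_all Primrec.id ?_
    have : Primrec fun q : List (W k) × W k => decide (FreeGroup.reduce q.2 = []) :=
      Primrec.eq.decide.comp ((reduce_primrec k).comp snd) (const [])
    refine (Primrec.not.comp this).to₂.of_eq ?_
    intro L w
    cases h : FreeGroup.reduce w <;> simp [h]
  have h2 : Primrec fun L : List (W k) => (perms (dd (suffs L))).any (okC L) :=
    primrec_list_any ((perms_primrec k).comp ((dd_primrec k).comp (suffs_primrec k)))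
      (((okC_primrec k).comp fst snd).to₂)
  exact ((dom_bool₂ (· && ·)).comp h1 h2).of_eq fun L => rfl

end Comp

end RO

/-- Decidability of extending a finite subset of a finitely generated free
group (given as a list of words) to a right order: the predicate is computable. -/
theorem right_order_extension_decidable (k : ℕ) :
    ComputablePred (fun L : List (List (Fin k × Bool)) =>
      ∃ r : FreeGroup (Fin k) → FreeGroup (Fin k) → Prop,
        IsLinearOrder _ r ∧
        (∀ a b c, r a b → r (a * c) (b * c)) ∧
        (∀ w ∈ L, r 1 (FreeGroup.mk w) ∧ FreeGroup.mk w ≠ 1)) := by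
  rw [ComputablePred.computable_iff]
  refine ⟨fun L => RO.fcheck L, (RO.fcheck_primrec k).to_comp, ?_⟩
  funext L
  apply propext
  constructor
  · rintro ⟨r, hlin, hinv, hL⟩
    show RO.fcheck L = true
    exact RO.complete r hlin hinv hL
  · intro h
    exact RO.sound h
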